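/- Let d > 0, let b : [0,∞) → [0, b₊] (0 < b₊ < ∞) be C¹ with b(0) = 0, and suppose there exists N* > 0 such that b(N) > dN for N ∈ (0, N*) and b(N) < dN for N > N*. Let 0 ≤ zmin < zmax and g : [zmin, zmax] → ℝ be C¹ with g > 0. Suppose S* ≥ 0 and r̄ : [zmin, zmax] → ℝ are such that (S*, r̄) ≠ (0, 0), z ↦ g(z) r̄(z) is differentiable with (g r̄)'(z) = d r̄(z) for all z, g(zmax) r̄(zmax) = 0, and 0 = b(N*ₑ) − d S* + g(zmin) r̄(zmin), where N*ₑ := S* + ∫_{zmin}^{zmax} r̄(z) dz. Then r̄ ≡ 0 on [zmin, zmax] and S* = N*ₑ = N*. In particular, the disease-free equilibrium is unique and equals (N*, 0, 0). -/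

import Mathlib

open Set MeasureTheory intervalIntegral

/-- Existence and uniqueness of the disease-free equilibrium: any stationary
disease-free solution `(S*, r̄) ≠ (0, 0)` of model (M1) satisfies `r̄ ≡ 0` and
`S* = N*ₑ = N*`, i.e. the DFE is `(N*, 0, 0)`. -/
theorem stmt9 (d bplus : ℝ) (hd : 0 < d) (hbplus : 0 < bplus)
    (b : ℝ → ℝ) (hbC : ContDiffOn ℝ 1 b (Ici 0))
    (hbrange : ∀ N : ℝ, 0 ≤ N → b N ∈ Icc 0 bplus) (hb0 : b 0 = 0)
    (Nstar : ℝ) (hNstar : 0 < Nstar)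
    (hlow : ∀ N : ℝ, 0 < N → N < Nstar → d * N < b N)
    (hhigh : ∀ N : ℝ, Nstar < N → b N < d * N)
    (zmin zmax : ℝ) (hzmin : 0 ≤ zmin) (hzz : zmin < zmax)
    (g : ℝ → ℝ) (hg : ContDiffOn ℝ 1 g (Icc zmin zmax))
    (hgpos : ∀ z ∈ Icc zmin zmax, 0 < g z)
    (Sstar : ℝ) (hSstar : 0 ≤ Sstar) (rbar : ℝ → ℝ)
    (hnontriv : ¬ (Sstar = 0 ∧ ∀ z ∈ Icc zmin zmax, rbar z = 0))
    (hode : ∀ z ∈ Icc zmin zmax,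
      HasDerivWithinAt (fun w => g w * rbar w) (d * rbar z) (Icc zmin zmax) z)
    (hbc : g zmax * rbar zmax = 0)
    (heq : 0 = b (Sstar + ∫ z in zmin..zmax, rbar z) - d * Sstar
      + g zmin * rbar zmin) :
    (∀ z ∈ Icc zmin zmax, rbar z = 0)
      ∧ Sstar = Sstar + ∫ z in zmin..zmax, rbar z
      ∧ Sstar + (∫ z in zmin..zmax, rbar z) = Nstar := by
  -- minimum of g on the compact interval
  obtain ⟨z0, hz0, hmin⟩ := isCompact_Icc.exists_isMinOn
    ⟨zmin, left_mem_Icc.2 hzz.le⟩ hg.continuousOn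
  have hmpos : 0 < g z0 := hgpos z0 hz0
  set K := d / g z0 with hK
  set c := zmin + zmax with hc
  set u := fun w => g w * rbar w with hu
  have hmap : MapsTo (fun x : ℝ => c - x) (Icc zmin zmax) (Icc zmin zmax) := by
    intro x hx
    constructor
    · simp only [hc]; linarith [hx.2]
    · simp only [hc]; linarith [hx.1]
  have hucont : ContinuousOn u (Icc zmin zmax) := fun z hz =>
    (hode z hz).continuousWithinAt
  have hf : ∀ x ∈ Icc zmin zmax, HasDerivWithinAt (fun x => u (c - x))
      (-(d * rbar (c - x))) (Icc zmin zmax) x := by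
    intro x hx
    have h1 : HasDerivWithinAt u (d * rbar (c - x)) (Icc zmin zmax) (c - x) :=
      hode _ (hmap hx)
    have h2 : HasDerivWithinAt (fun x : ℝ => c - x) (-1) (Icc zmin zmax) x := by
      exact (hasDerivWithinAt_id x (Icc zmin zmax)).const_sub c
    have := h1.comp x h2 hmap
    exact this.congr_deriv (by ring)
  have key : ∀ z ∈ Icc zmin zmax, u z = 0 := by
    intro z hz
    have hz' : c - z ∈ Icc zmin zmax := hmap hz
    have hcont : ContinuousOn (fun x => u (c - x)) (Icc zmin zmax) :=
      hucont.comp (by fun_prop) hmap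
    have hderiv : ∀ x ∈ Ico zmin zmax, HasDerivWithinAt (fun x => u (c - x))
        (-(d * rbar (c - x))) (Ici x) x := by
      intro x hx
      exact (hf x (Ico_subset_Icc_self hx)).mono_of_mem_nhdsWithin (Icc_mem_nhdsGE_of_mem hx)
    have ha : ‖u (c - zmin)‖ ≤ (0 : ℝ) := by
      have : c - zmin = zmax := by simp [hc]
      rw [this]
      simp [hu, hbc]
    have hbound : ∀ x ∈ Ico zmin zmax,
        ‖-(d * rbar (c - x))‖ ≤ K * ‖u (c - x)‖ + 0 := by
      intro x hx
      have hx' : c - x ∈ Icc zmin zmax := hmap (Ico_subset_Icc_self hx)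
      have hgx : 0 < g (c - x) := hgpos _ hx'
      have hmle : g z0 ≤ g (c - x) := hmin hx'
      have : ‖u (c - x)‖ = g (c - x) * |rbar (c - x)| := by
        simp [hu, abs_mul, abs_of_pos hgx]
      rw [this, norm_neg]
      have hnn : (0:ℝ) ≤ |rbar (c - x)| := abs_nonneg _
      have : ‖d * rbar (c - x)‖ = d * |rbar (c - x)| := by
        rw [norm_mul]; simp [abs_of_pos hd]
      rw [this, add_zero, hK, div_mul_eq_mul_div, mul_comm (g (c-x)), ← mul_assoc,
        le_div_iff₀ hmpos]
      have : d * g z0 ≤ d * g (c - x) := by nlinarith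
      nlinarith
    have := norm_le_gronwallBound_of_norm_deriv_right_le hcont hderiv ha hbound
      (c - z) hz'
    rw [gronwallBound_ε0_δ0] at this
    have huz : u (c - (c - z)) = u z := by ring_nf
    have : ‖u z‖ ≤ 0 := by
      have h2 : c - (c - z) = z := by ring
      rwa [h2] at this
    simpa using le_antisymm this (norm_nonneg _)
  have hr0 : ∀ z ∈ Icc zmin zmax, rbar z = 0 := by
    intro z hz
    have := key z hz
    have hgz := hgpos z hz
    simp only [hu] at this
    exact (mul_eq_zero.1 this).resolve_left (ne_of_gt hgz)
  have hint : (∫ z in zmin..zmax, rbar z) = 0 := by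
    rw [intervalIntegral.integral_congr (g := fun _ => (0:ℝ))
      (by intro z hz; exact hr0 z (by rwa [uIcc_of_le hzz.le] at hz))]
    simp
  have hSne : Sstar ≠ 0 := by
    intro h0
    exact hnontriv ⟨h0, hr0⟩
  have hSpos : 0 < Sstar := lt_of_le_of_ne hSstar (Ne.symm hSne)
  have hbS : b Sstar = d * Sstar := by
    have hrmin : rbar zmin = 0 := hr0 zmin (left_mem_Icc.2 hzz.le)
    rw [hint, add_zero, hrmin] at heq
    linarith
  refine ⟨hr0, by rw [hint, add_zero], ?_⟩
  rw [hint, add_zero]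
  rcases lt_trichotomy Sstar Nstar with h | h | h
  · exact absurd hbS (by have := hlow Sstar hSpos h; linarith)
  · exact h
  · exact absurd hbS (by have := hhigh Sstar h; linarith)
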